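/- If γ is a centered coloring of a graph G using h colors, then the tree-depth of G is at most h. -/

import Mathlib

/-- A rooted forest on vertex type `V`, given by a parent function and a depth
function (depth 0 = roots). -/
structure RootedForest (V : Type*) where
  parent : V → V
  depth : V → ℕ
  root_iff : ∀ v, parent v = v ↔ depth v = 0
  depth_parent : ∀ v, depth v ≠ 0 → depth (parent v) + 1 = depth v

namespace RootedForest

variable {V : Type*}

/-- The forest has height at most `h` (counted in vertices on root-to-leaf paths). -/
def HeightLE (F : RootedForest V) (h : ℕ) : Prop := ∀ v, F.depth v + 1 ≤ h

/-- `y` is an ancestor of `x` (possibly `y = x`). -/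
def Ancestor (F : RootedForest V) (y x : V) : Prop := ∃ j, F.parent^[j] x = y

/-- Adjacency in the closure of the forest: distinct comparable vertices. -/
def ClosureAdj (F : RootedForest V) (x y : V) : Prop :=
  x ≠ y ∧ (F.Ancestor x y ∨ F.Ancestor y x)

end RootedForest

/-- The graph `G` has tree-depth at most `h`: it is a subgraph of the closure of a
rooted forest of height at most `h`. -/
def TreedepthLE {V : Type*} (G : SimpleGraph V) (h : ℕ) : Prop :=
  ∃ F : RootedForest V, F.HeightLE h ∧ ∀ x y, G.Adj x y → F.ClosureAdj x y

/-- The tree-depth of a graph. -/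
noncomputable def treedepth {V : Type*} (G : SimpleGraph V) : ℕ :=
  sInf {h | TreedepthLE G h}

/-- `γ` is a `p`-centered coloring of `G`: every connected subgraph either has a
color appearing exactly once or receives at least `p` colors. -/
def IsPCentered {V C : Type*} (G : SimpleGraph V) (γ : V → C) (p : ℕ) : Prop :=
  ∀ H : G.Subgraph, H.Connected →
    (∃ c, {v ∈ H.verts | γ v = c}.ncard = 1) ∨ p ≤ (γ '' H.verts).ncard

/-- `γ` is a centered coloring of `G`: every connected subgraph has a color
appearing exactly once. -/
def IsCentered {V C : Type*} (G : SimpleGraph V) (γ : V → C) : Prop :=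
  ∀ H : G.Subgraph, H.Connected → ∃ c, {v ∈ H.verts | γ v = c}.ncard = 1
section CenteredAux

variable {V : Type*} (G : SimpleGraph V) {h : ℕ} (γ : V → Fin h)

/-- One step of reachability within a vertex set `S`. -/
def CStep (S : Set V) (a b : V) : Prop := a ∈ S ∧ b ∈ S ∧ G.Adj a b

/-- The connected component of `v` within the vertex set `S`. -/
def Kc (S : Set V) (v : V) : Set V := {w | Relation.ReflTransGen (CStep G S) v w}

lemma mem_Kc_self (S : Set V) (v : V) : v ∈ Kc G S v := Relation.ReflTransGen.refl

lemma Kc_subset {S : Set V} {v : V} (hv : v ∈ S) : Kc G S v ⊆ S := by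
  intro w hw
  induction hw with
  | refl => exact hv
  | tail _ hstep _ => exact hstep.2.1

lemma cstep_symm (S : Set V) : Symmetric (CStep G S) :=
  fun _ _ hab => ⟨hab.2.1, hab.1, hab.2.2.symm⟩

lemma Kc_eq_of_mem {S : Set V} {v w : V} (hw : w ∈ Kc G S v) : Kc G S w = Kc G S v := by
  have hsym : Symmetric (Relation.ReflTransGen (CStep G S)) := by
    haveI : Std.Symm (CStep G S) := ⟨cstep_symm G S⟩
    exact fun a b hab => (Relation.ReflTransGen.symmetric).symm a b hab
  ext x
  exact ⟨fun hx => Relation.ReflTransGen.trans hw hx,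
    fun hx => Relation.ReflTransGen.trans (hsym hw) hx⟩

open Classical in
/-- Choice of a uniquely-colored vertex in `A` (with fallback `x`). -/
noncomputable def rt (A : Set V) (x : V) : V :=
  if hA : ∃ a, a ∈ A ∧ {u | u ∈ A ∧ γ u = γ a} = {a} then hA.choose else x

lemma rt_spec {A : Set V} (hA : ∃ a, a ∈ A ∧ {u | u ∈ A ∧ γ u = γ a} = {a}) (x : V) :
    rt γ A x ∈ A ∧ {u | u ∈ A ∧ γ u = γ (rt γ A x)} = {rt γ A x} := by
  rw [rt, dif_pos hA]; exact hA.choose_spec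

lemma rt_indep {A : Set V} (hA : ∃ a, a ∈ A ∧ {u | u ∈ A ∧ γ u = γ a} = {a}) (x y : V) :
    rt γ A x = rt γ A y := by
  unfold rt; rw [dif_pos hA, dif_pos hA]

/-- Every component has a uniquely-colored vertex, by the centered coloring. -/
lemma exists_center (hγ : IsCentered G γ) {S : Set V} {v : V} (hv : v ∈ S) :
    ∃ a, a ∈ Kc G S v ∧ {u | u ∈ Kc G S v ∧ γ u = γ a} = {a} := by
  set A := Kc G S v with hAdef
  let H : G.Subgraph :=
    { verts := A
      Adj := fun a b => a ∈ A ∧ b ∈ A ∧ G.Adj a b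
      adj_sub := fun hab => hab.2.2
      edge_vert := fun hab => hab.1
      symm := ⟨fun _ _ hab => ⟨hab.2.1, hab.1, hab.2.2.symm⟩⟩ }
  have hvA : v ∈ A := mem_Kc_self G S v
  have key : ∀ a, a ∈ A → ∀ ha : a ∈ A, H.coe.Reachable ⟨v, hvA⟩ ⟨a, ha⟩ := by
    intro a ha
    induction ha with
    | refl => intro _; exact SimpleGraph.Reachable.refl _
    | @tail b c hb hstep ih =>
      intro hc
      have hbA : b ∈ A := hb
      have hadj : H.coe.Adj ⟨b, hbA⟩ ⟨c, hc⟩ := ⟨hbA, hc, hstep.2.2⟩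
      exact (ih hbA).trans hadj.reachable
  have hconn : H.Connected := by
    rw [SimpleGraph.Subgraph.connected_iff]
    refine ⟨⟨fun a b => ?_⟩, ⟨v, hvA⟩⟩
    exact ((key a.1 a.2 a.2).symm).trans (key b.1 b.2 b.2)
  obtain ⟨c, hc⟩ := hγ H hconn
  rw [Set.ncard_eq_one] at hc
  obtain ⟨a, ha⟩ := hc
  have haA : a ∈ {v_1 | v_1 ∈ H.verts ∧ γ v_1 = c} := by rw [ha]; rfl
  refine ⟨a, haA.1, ?_⟩
  rw [← ha]
  ext u
  simp only [Set.mem_setOf_eq]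
  exact and_congr_right (fun _ => by rw [haA.2])

/-- The chain of components of `v` obtained by repeatedly deleting the chosen
uniquely-colored vertex. -/
noncomputable def seqS (v : V) : ℕ → Set V
  | 0 => Kc G Set.univ v
  | i + 1 => Kc G (seqS v i \ {rt γ (seqS v i) v}) v

lemma mem_seqS_self (v : V) (i : ℕ) : v ∈ seqS G γ v i := by
  cases i with
  | zero => exact mem_Kc_self G _ v
  | succ j => exact mem_Kc_self G _ v

lemma Kc_subset_insert (S : Set V) (v : V) : Kc G S v ⊆ insert v S := by
  intro w hw
  induction hw with
  | refl => exact Set.mem_insert _ _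
  | tail _ hstep _ => exact Set.mem_insert_of_mem _ hstep.2.1

lemma seqS_succ_subset (v : V) (i : ℕ) : seqS G γ v (i + 1) ⊆ seqS G γ v i := by
  intro w hw
  rcases Set.mem_insert_iff.mp (Kc_subset_insert G _ v hw) with h' | hw'
  · exact h' ▸ mem_seqS_self G γ v i
  · exact hw'.1

lemma seqS_anti (v : V) {i j : ℕ} (hij : j ≤ i) : seqS G γ v i ⊆ seqS G γ v j := by
  induction i with
  | zero => rw [Nat.le_zero.mp hij]
  | succ k ih =>
    rcases Nat.lt_or_ge j (k+1) with hj | hj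
    · exact (seqS_succ_subset G γ v k).trans (ih (Nat.lt_succ_iff.mp hj))
    · rw [Nat.le_antisymm hij hj]

/-- At a "good" stage, the component has a uniquely-colored vertex. -/
lemma seq_center (hγ : IsCentered G γ) (v : V) (i : ℕ)
    (hi : ∀ j < i, v ≠ rt γ (seqS G γ v j) v) :
    ∃ a, a ∈ seqS G γ v i ∧ {u | u ∈ seqS G γ v i ∧ γ u = γ a} = {a} := by
  cases i with
  | zero => exact exists_center G γ hγ (Set.mem_univ v)
  | succ j =>
    refine exists_center G γ hγ (S := seqS G γ v j \ {rt γ (seqS G γ v j) v}) ?_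
    exact ⟨mem_seqS_self G γ v j, hi j (Nat.lt_succ_self j)⟩

lemma seqS_succ_subset' (hγ : IsCentered G γ) (v : V) (i : ℕ)
    (hi : ∀ j < i + 1, v ≠ rt γ (seqS G γ v j) v) :
    seqS G γ v (i + 1) ⊆ seqS G γ v i \ {rt γ (seqS G γ v i) v} :=
  Kc_subset G ⟨mem_seqS_self G γ v i, hi i (Nat.lt_succ_self i)⟩

/-- Components of the chains agree while both vertices are present. -/
lemma seq_eq_of_mem (hγ : IsCentered G γ) {v w : V} {i : ℕ}
    (hG : ∀ j < i, v ≠ rt γ (seqS G γ v j) v) (hw : w ∈ seqS G γ v i) :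
    ∀ j ≤ i, seqS G γ w j = seqS G γ v j := by
  intro j hj
  induction j with
  | zero =>
    have hw0 : w ∈ seqS G γ v 0 := seqS_anti G γ v (Nat.zero_le i) hw
    exact Kc_eq_of_mem G hw0
  | succ k ih =>
    have hk : k ≤ i := Nat.le_of_succ_le hj
    have heq : seqS G γ w k = seqS G γ v k := ih hk
    have hcond := seq_center G γ hγ v k (fun j hji => hG j (lt_of_lt_of_le hji hk))
    have hrt : rt γ (seqS G γ w k) w = rt γ (seqS G γ v k) v := by
      rw [heq]; exact rt_indep γ hcond w v
    have hwk : w ∈ seqS G γ v (k + 1) := seqS_anti G γ v hj hw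
    show Kc G (seqS G γ w k \ {rt γ (seqS G γ w k) w}) w = seqS G γ v (k+1)
    rw [hrt, heq]
    exact Kc_eq_of_mem G hwk

/-- The number of colors drops at each stage. -/
lemma color_count (hγ : IsCentered G γ) (v : V) (i : ℕ)
    (hi : ∀ j < i, v ≠ rt γ (seqS G γ v j) v) :
    (γ '' seqS G γ v i).ncard + i ≤ h := by
  induction i with
  | zero =>
    have : (γ '' seqS G γ v 0).ncard ≤ (Set.univ : Set (Fin h)).ncard :=
      Set.ncard_le_ncard (Set.subset_univ _) Set.finite_univ
    simpa [Set.ncard_univ] using this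
  | succ k ih =>
    have hik : ∀ j < k, v ≠ rt γ (seqS G γ v j) v := fun j hj => hi j (Nat.lt_succ_of_lt hj)
    have hcond := seq_center G γ hγ v k hik
    set r := rt γ (seqS G γ v k) v with hrdef
    obtain ⟨hrmem, hruniq⟩ := rt_spec γ hcond v
    have hsub : γ '' seqS G γ v (k+1) ⊆ (γ '' seqS G γ v k) \ {γ r} := by
      rintro c ⟨u, hu, rfl⟩
      have hu' : u ∈ seqS G γ v k \ {r} := seqS_succ_subset' G γ hγ v k hi hu
      refine ⟨⟨u, hu'.1, rfl⟩, ?_⟩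
      intro hc
      have : u ∈ {u | u ∈ seqS G γ v k ∧ γ u = γ r} := ⟨hu'.1, hc⟩
      rw [hruniq] at this
      exact hu'.2 this
    have hγr : γ r ∈ γ '' seqS G γ v k := ⟨r, hrmem, rfl⟩
    have h1 : (γ '' seqS G γ v (k+1)).ncard ≤ ((γ '' seqS G γ v k) \ {γ r}).ncard :=
      Set.ncard_le_ncard hsub (Set.toFinite _)
    have h2 : ((γ '' seqS G γ v k) \ {γ r}).ncard = (γ '' seqS G γ v k).ncard - 1 :=
      Set.ncard_diff_singleton_of_mem hγr
    have h3 : 1 ≤ (γ '' seqS G γ v k).ncard :=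
      (Set.ncard_pos (Set.toFinite _)).mpr ⟨γ r, hγr⟩
    have := ih hik
    omega

/-- Eventually `v` becomes the chosen root of its component. -/
lemma exists_root (hγ : IsCentered G γ) (v : V) :
    ∃ i, v = rt γ (seqS G γ v i) v := by
  by_contra hcon
  push_neg at hcon
  have := color_count G γ hγ v h (fun j _ => hcon j)
  have h3 : 1 ≤ (γ '' seqS G γ v h).ncard :=
    (Set.ncard_pos (Set.toFinite _)).mpr ⟨γ v, v, mem_seqS_self G γ v h, rfl⟩
  omega

/-- The depth of a vertex: the stage at which it becomes a root. -/
noncomputable def dep (v : V) : ℕ := sInf {i | v = rt γ (seqS G γ v i) v}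

/-- The parent of a vertex: the root chosen one stage earlier. -/
noncomputable def par (v : V) : V :=
  if dep G γ v = 0 then v else rt γ (seqS G γ v (dep G γ v - 1)) v

lemma dep_spec (hγ : IsCentered G γ) (v : V) : v = rt γ (seqS G γ v (dep G γ v)) v :=
  Nat.sInf_mem (exists_root G γ hγ v)

lemma dep_min (v : V) {j : ℕ} (hj : j < dep G γ v) : v ≠ rt γ (seqS G γ v j) v :=
  Nat.notMem_of_lt_sInf hj

lemma dep_lt (hγ : IsCentered G γ) (hpos : 0 < h) (v : V) : dep G γ v + 1 ≤ h := by
  have := color_count G γ hγ v (dep G γ v) (fun j hj => dep_min G γ v hj)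
  have h3 : 1 ≤ (γ '' seqS G γ v (dep G γ v)).ncard :=
    (Set.ncard_pos (Set.toFinite _)).mpr ⟨γ v, v, mem_seqS_self G γ v _, rfl⟩
  omega

/-- Key lemma about the parent: it has depth one less, and the same chain below. -/
lemma par_spec (hγ : IsCentered G γ) (v : V) (hne : dep G γ v ≠ 0) :
    dep G γ (par G γ v) = dep G γ v - 1 ∧
      ∀ j ≤ dep G γ v - 1, seqS G γ (par G γ v) j = seqS G γ v j := by
  set d := dep G γ v with hd
  set k := d - 1 with hk
  have hkd : k < d := by omega
  have hGk : ∀ j < k, v ≠ rt γ (seqS G γ v j) v := fun j hj => dep_min G γ v (hj.trans hkd)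
  have hcond := seq_center G γ hγ v k hGk
  have hpar : par G γ v = rt γ (seqS G γ v k) v := by rw [par, if_neg hne]
  set r := rt γ (seqS G γ v k) v with hr
  obtain ⟨hrmem, _⟩ := rt_spec γ hcond v
  have hseq : ∀ j ≤ k, seqS G γ r j = seqS G γ v j := seq_eq_of_mem G γ hγ hGk hrmem
  have hPk : r = rt γ (seqS G γ r k) r := by
    rw [hseq k le_rfl]
    exact rt_indep γ hcond v r ▸ rfl
  have hnot : ∀ j < k, r ≠ rt γ (seqS G γ r j) r := by
    intro j hj
    have hcondj := seq_center G γ hγ v j (fun m hm => hGk m (hm.trans hj))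
    have heq : rt γ (seqS G γ r j) r = rt γ (seqS G γ v j) v := by
      rw [hseq j hj.le]; exact rt_indep γ hcondj r v
    rw [heq]
    have hsub : seqS G γ v (j+1) ⊆ seqS G γ v j \ {rt γ (seqS G γ v j) v} :=
      seqS_succ_subset' G γ hγ v j (fun m hm => dep_min G γ v (by omega))
    have hr' : r ∈ seqS G γ v (j+1) := seqS_anti G γ v (by omega) hrmem
    exact (hsub hr').2
  have hdep : dep G γ r = k := by
    refine le_antisymm (Nat.sInf_le hPk) ?_
    by_contra hlt
    push_neg at hlt
    have hmem := Nat.sInf_mem (⟨k, hPk⟩ : ∃ i, r = rt γ (seqS G γ r i) r)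
    exact hnot _ hlt hmem
  rw [hpar]
  exact ⟨hdep, hseq⟩

/-- The iterated parent recovers each root along the chain. -/
lemma iter_par (hγ : IsCentered G γ) :
    ∀ n v, dep G γ v = n → ∀ k ≤ n, (par G γ)^[n - k] v = rt γ (seqS G γ v k) v := by
  intro n
  induction n using Nat.strong_induction_on with
  | _ n ih =>
    intro v hv k hk
    rcases eq_or_lt_of_le hk with rfl | hkn
    · simpa using (hv ▸ dep_spec G γ hγ v)
    · have hne : dep G γ v ≠ 0 := by omega
      obtain ⟨hdp, hseq⟩ := par_spec G γ hγ v hne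
      have hd1 : dep G γ (par G γ v) = n - 1 := by rw [hdp, hv]
      have hstep : n - k = ((n - 1) - k) + 1 := by omega
      rw [hstep, Function.iterate_succ_apply]
      have := ih (n-1) (by omega) (par G γ v) hd1 k (by omega)
      rw [this]
      have hcondk := seq_center G γ hγ v k (fun j hj => dep_min G γ v (by omega))
      rw [hseq k (by omega : k ≤ dep G γ v - 1)]
      exact rt_indep γ hcondk (par G γ v) v

/-- Adjacent vertices stay in the same component while both survive. -/
lemma adj_chain (hγ : IsCentered G γ) {x y : V} (hxy : G.Adj x y) :
    ∀ i, i ≤ dep G γ x → i ≤ dep G γ y →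
      y ∈ seqS G γ x i ∧ seqS G γ x i = seqS G γ y i := by
  intro i
  induction i with
  | zero =>
    intro _ _
    have hy : y ∈ seqS G γ x 0 :=
      Relation.ReflTransGen.single ⟨Set.mem_univ x, Set.mem_univ y, hxy⟩
    exact ⟨hy, (Kc_eq_of_mem G hy).symm⟩
  | succ i ih =>
    intro hx hy
    obtain ⟨hyi, heq⟩ := ih (Nat.le_of_succ_le hx) (Nat.le_of_succ_le hy)
    have hcondx := seq_center G γ hγ x i (fun j hj => dep_min G γ x (by omega))
    set r := rt γ (seqS G γ x i) x with hr
    have hry : rt γ (seqS G γ y i) y = r := by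
      rw [← heq]; exact rt_indep γ hcondx y x
    have hxr : x ≠ r := dep_min G γ x (by omega)
    have hyr : y ≠ r := by
      have := dep_min G γ y (show i < dep G γ y by omega)
      rw [hry] at this; exact this
    have hxmem : x ∈ seqS G γ x i \ {r} := ⟨mem_seqS_self G γ x i, hxr⟩
    have hymem : y ∈ seqS G γ x i \ {r} := ⟨hyi, hyr⟩
    have hy1 : y ∈ seqS G γ x (i+1) :=
      Relation.ReflTransGen.single ⟨hxmem, hymem, hxy⟩
    refine ⟨hy1, ?_⟩
    show seqS G γ x (i+1) = Kc G (seqS G γ y i \ {rt γ (seqS G γ y i) y}) y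
    rw [hry, ← heq]
    exact (Kc_eq_of_mem G hy1).symm

end CenteredAux

section MainProof

variable {V : Type*} [Fintype V] {h : ℕ}

lemma anc_of_le (G : SimpleGraph V) (γ : V → Fin h) (hγ : IsCentered G γ) {x y : V}
    (hxy : G.Adj x y) (hle : dep G γ x ≤ dep G γ y) :
    (par G γ)^[dep G γ y - dep G γ x] y = x := by
  have hch := adj_chain G γ hγ hxy (dep G γ x) le_rfl hle
  have hit := iter_par G γ hγ (dep G γ y) y rfl (dep G γ x) hle
  rw [hit, ← hch.2]
  have hcond := seq_center G γ hγ x (dep G γ x) (fun j hj => dep_min G γ x hj)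
  rw [rt_indep γ hcond y x]
  exact (dep_spec G γ hγ x).symm

end MainProof

/-- If `γ` is a centered coloring of `G` using `h` colors, then the tree-depth
of `G` is at most `h`. -/
theorem centered_treedepth_le {V : Type*} [Fintype V] (G : SimpleGraph V)
    (h : ℕ) (γ : V → Fin h) (hγ : IsCentered G γ) :
    TreedepthLE G h := by
  cases isEmpty_or_nonempty V with
  | inl hE =>
    exact ⟨⟨id, fun _ => 0, fun v => by simp, fun v h0 => absurd rfl h0⟩,
      fun v => (IsEmpty.false v).elim, fun x _ _ => (IsEmpty.false x).elim⟩
  | inr hN =>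
    have hpos : 0 < h := (γ (Classical.arbitrary V)).pos
    refine ⟨⟨par G γ, dep G γ, ?_, ?_⟩, ?_, ?_⟩
    · intro v
      constructor
      · intro hpv
        by_contra hne
        have hpar : par G γ v = rt γ (seqS G γ v (dep G γ v - 1)) v := by
          rw [par, if_neg hne]
        have := dep_min G γ v (show dep G γ v - 1 < dep G γ v by omega)
        rw [← hpar, hpv] at this
        exact this rfl
      · intro h0
        rw [par, if_pos h0]
    · intro v hne
      have := (par_spec G γ hγ v hne).1
      omega
    · exact fun v => dep_lt G γ hγ hpos v
    · intro x y hxy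
      refine ⟨hxy.ne, ?_⟩
      rcases le_total (dep G γ x) (dep G γ y) with hle | hle
      · exact Or.inl ⟨_, anc_of_le G γ hγ hxy hle⟩
      · exact Or.inr ⟨_, anc_of_le G γ hγ hxy.symm hle⟩
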